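/- (α,β-symmetric Hölder inequality) Let α, β ≥ 0 with α + β ≠ 0, a < b with b ∈ {a+kα : k ∈ ℕ₀} and a ∈ {b−kβ : k ∈ ℕ₀}, p > 1, q = p/(p−1). If |f| and |g| are α,β-symmetric integrable on [a,b], then ∫_a^b |f(t)g(t)| d_{α,β}t ≤ (∫_a^b |f(t)|^p d_{α,β}t)^{1/p} · (∫_a^b |g(t)|^q d_{α,β}t)^{1/q}. -/

import Mathlib

/-- The `α,β`-symmetric integral of `h` from `a` to `b`: the convex combination, with
weights `α/(α+β)` and `β/(α+β)`, of the `α`-forward and `β`-backward Nörlund integrals. -/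
noncomputable def symInt (α β a b : ℝ) (h : ℝ → ℝ) : ℝ :=
  (α / (α + β)) * ((α * ∑' k : ℕ, h (a + k * α)) - (α * ∑' k : ℕ, h (b + k * α)))
    + (β / (α + β)) * ((β * ∑' k : ℕ, h (b - k * β)) - (β * ∑' k : ℕ, h (a - k * β)))

/-- `h` is `α,β`-symmetric integrable on `[a,b]`: all four relevant series converge. -/
def SymIntegrable (α β a b : ℝ) (h : ℝ → ℝ) : Prop :=
  Summable (fun k : ℕ => h (a + k * α)) ∧ Summable (fun k : ℕ => h (b + k * α)) ∧
  Summable (fun k : ℕ => h (b - k * β)) ∧ Summable (fun k : ℕ => h (a - k * β))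


lemma aux_mul {x y : ℕ → ℝ} (hx : Summable fun k => |x k|) (hy : Summable fun k => |y k|) :
    Summable fun k => |x k * y k| := by
  refine (hx.mul_left (∑' k, |y k|)).of_nonneg_of_le (fun k => abs_nonneg _) fun k => ?_
  rw [abs_mul, mul_comm]
  exact mul_le_mul_of_nonneg_right (Summable.le_tsum hy k fun j _ => abs_nonneg _) (abs_nonneg _)

lemma aux_rpow {x : ℕ → ℝ} (hx : Summable fun k => |x k|) {r : ℝ} (hr : 1 ≤ r) :
    Summable fun k => |x k| ^ r := by
  refine Summable.of_norm_bounded_eventually hx ?_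
  have h1 : ∀ᶠ k in Filter.cofinite, |x k| < 1 :=
    hx.tendsto_cofinite_zero.eventually_lt_const one_pos
  filter_upwards [h1] with k hk
  rw [Real.norm_eq_abs, abs_of_nonneg (Real.rpow_nonneg (abs_nonneg _) _)]
  rcases eq_or_lt_of_le (abs_nonneg (x k)) with h0 | h0
  · rw [← h0, Real.zero_rpow (by linarith)]
  · calc |x k| ^ r ≤ |x k| ^ (1:ℝ) :=
        Real.rpow_le_rpow_of_exponent_ge h0 hk.le hr
      _ = |x k| := Real.rpow_one _

lemma aux_repr (α β a b : ℝ) (K L : ℕ) (hKb : b = a + K * α) (hLa : a = b - L * β)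
    (h : ℝ → ℝ) (hs : SymIntegrable α β a b h) :
    symInt α β a b h = ∑ k ∈ Finset.range K, (α * α / (α + β)) * h (a + k * α)
      + ∑ k ∈ Finset.range L, (β * β / (α + β)) * h (b - k * β) := by
  obtain ⟨h1, h2, h3, h4⟩ := hs
  have e1 : (∑' k : ℕ, h (a + k * α)) - (∑' k : ℕ, h (b + k * α))
      = ∑ k ∈ Finset.range K, h (a + k * α) := by
    have := Summable.sum_add_tsum_nat_add K h1
    have e : ∀ k : ℕ, h (a + (k + K : ℕ) * α) = h (b + k * α) := by
      intro k; congr 1; push_cast [hKb]; ring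
    rw [← this]
    simp only [e]
    ring
  have e2 : (∑' k : ℕ, h (b - k * β)) - (∑' k : ℕ, h (a - k * β))
      = ∑ k ∈ Finset.range L, h (b - k * β) := by
    have := Summable.sum_add_tsum_nat_add L h3
    have e : ∀ k : ℕ, h (b - (k + L : ℕ) * β) = h (a - k * β) := by
      intro k; congr 1; push_cast [hLa]; ring
    rw [← this]
    simp only [e]
    ring
  have : symInt α β a b h = (α * α / (α + β)) * ((∑' k : ℕ, h (a + k * α)) - (∑' k : ℕ, h (b + k * α)))
      + (β * β / (α + β)) * ((∑' k : ℕ, h (b - k * β)) - (∑' k : ℕ, h (a - k * β))) := by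
    unfold symInt; ring
  rw [this, e1, e2, Finset.mul_sum, Finset.mul_sum]

lemma aux_pt {c x y p q : ℝ} (hc : 0 < c) (hpq : Real.HolderConjugate p q) :
    (c ^ (1/p) * |x|) * (c ^ (1/q) * |y|) = c * |x * y| := by
  rw [abs_mul, mul_mul_mul_comm, ← Real.rpow_add hc, one_div, one_div,
    hpq.inv_add_inv_eq_one, Real.rpow_one]

lemma aux_pow {c x r : ℝ} (hc : 0 ≤ c) (hr : r ≠ 0) :
    (c ^ (1/r) * |x|) ^ r = c * |x| ^ r := by
  rw [Real.mul_rpow (Real.rpow_nonneg hc _) (abs_nonneg _), ← Real.rpow_mul hc,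
    one_div_mul_cancel hr, Real.rpow_one]

/-- `α,β`-symmetric Hölder inequality: for `p > 1`, `q = p/(p−1)`, if `|f|` and `|g|`
are `α,β`-symmetric integrable on `[a,b]`, then
`∫_a^b |fg| d_{α,β}t ≤ (∫_a^b |f|^p d_{α,β}t)^{1/p} · (∫_a^b |g|^q d_{α,β}t)^{1/q}`. -/
theorem stmt14 (α β a b : ℝ) (hα : 0 ≤ α) (hβ : 0 ≤ β) (hαβ : α + β ≠ 0)
    (hab : a < b) (hbA : ∃ k : ℕ, b = a + k * α) (haB : ∃ k : ℕ, a = b - k * β)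
    (p q : ℝ) (hp : 1 < p) (hq : q = p / (p - 1))
    (f g : ℝ → ℝ)
    (hf : SymIntegrable α β a b (fun t => |f t|))
    (hg : SymIntegrable α β a b (fun t => |g t|)) :
    symInt α β a b (fun t => |f t * g t|)
      ≤ (symInt α β a b (fun t => |f t| ^ p)) ^ (1 / p)
        * (symInt α β a b (fun t => |g t| ^ q)) ^ (1 / q) := by
  obtain ⟨K, hKb⟩ := hbA
  obtain ⟨L, hLa⟩ := haB
  have hα0 : 0 < α := by
    rcases hα.lt_or_eq with h | h
    · exact h
    · exfalso
      rw [← h, mul_zero, add_zero] at hKb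
      linarith
  have hβ0 : 0 < β := by
    rcases hβ.lt_or_eq with h | h
    · exact h
    · exfalso
      rw [← h, mul_zero, sub_zero] at hLa
      linarith
  have hab0 : 0 < α + β := by linarith
  have hpq : Real.HolderConjugate p q := (Real.holderConjugate_iff_eq_conjExponent hp).2 hq
  have hq1 : 1 ≤ q := hpq.symm.lt.le
  have hp0 : p ≠ 0 := hpq.ne_zero
  have hq0 : q ≠ 0 := hpq.symm.ne_zero
  obtain ⟨hf1, hf2, hf3, hf4⟩ := hf
  obtain ⟨hg1, hg2, hg3, hg4⟩ := hg
  have hfg : SymIntegrable α β a b (fun t => |f t * g t|) :=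
    ⟨aux_mul hf1 hg1, aux_mul hf2 hg2, aux_mul hf3 hg3, aux_mul hf4 hg4⟩
  have hfp : SymIntegrable α β a b (fun t => |f t| ^ p) :=
    ⟨aux_rpow hf1 hp.le, aux_rpow hf2 hp.le, aux_rpow hf3 hp.le, aux_rpow hf4 hp.le⟩
  have hgq : SymIntegrable α β a b (fun t => |g t| ^ q) :=
    ⟨aux_rpow hg1 hq1, aux_rpow hg2 hq1, aux_rpow hg3 hq1, aux_rpow hg4 hq1⟩
  rw [aux_repr α β a b K L hKb hLa _ hfg, aux_repr α β a b K L hKb hLa _ hfp,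
    aux_repr α β a b K L hKb hLa _ hgq]
  set c1 : ℝ := α * α / (α + β) with hc1def
  set c2 : ℝ := β * β / (α + β) with hc2def
  have hc1 : 0 < c1 := by positivity
  have hc2 : 0 < c2 := by positivity
  have hw : ∀ i : ℕ ⊕ ℕ, 0 < Sum.elim (fun _ : ℕ => c1) (fun _ : ℕ => c2) i := by
    rintro (i | i) <;> simpa
  have key := Real.inner_le_Lp_mul_Lq_of_nonneg
    (s := (Finset.range K).disjSum (Finset.range L))
    (f := fun i => (Sum.elim (fun _ : ℕ => c1) (fun _ : ℕ => c2) i) ^ (1/p)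
      * |f (Sum.elim (fun k : ℕ => a + k * α) (fun k : ℕ => b - k * β) i)|)
    (g := fun i => (Sum.elim (fun _ : ℕ => c1) (fun _ : ℕ => c2) i) ^ (1/q)
      * |g (Sum.elim (fun k : ℕ => a + k * α) (fun k : ℕ => b - k * β) i)|)
    hpq
    (fun i _ => mul_nonneg (Real.rpow_nonneg (hw i).le _) (abs_nonneg _))
    (fun i _ => mul_nonneg (Real.rpow_nonneg (hw i).le _) (abs_nonneg _))
  simp only [Finset.sum_disjSum, Sum.elim_inl, Sum.elim_inr] at key
  simp only [aux_pt hc1 hpq, aux_pt hc2 hpq, aux_pow hc1.le hp0, aux_pow hc2.le hp0,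
    aux_pow hc1.le hq0, aux_pow hc2.le hq0] at key
  exact key
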